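/- Let B be an m×m complex matrix and c, d ∈ ℂ. Let λ↑ be the least singular value of B + cI and λ↓ the least singular value of B − cI, and let O be the 2m×2m block matrix [[B + cI, 0],[dI, B − cI]]. Then the least singular value σ_min(O) satisfies σ_min(O)² · (λ↑² + λ↓² + |d|²) ≥ λ↑² · λ↓². In particular, if λ↑, λ↓ > 0 and the ground state energy of O†O is small, σ_min(O) ≥ λ↑λ↓/√(λ↑² + λ↓² + |d|²). -/

import Mathlib

open scoped BigOperators

/-- The least singular value of a complex square matrix: the infimum over unit vectors `x`
of `‖M x‖`, with `M` acting on Euclidean space. -/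
noncomputable def leastSingularValue {k : Type*} [Fintype k] [DecidableEq k]
    (M : Matrix k k ℂ) : ℝ :=
  sInf {r : ℝ | ∃ x : EuclideanSpace ℂ k, ‖x‖ = 1 ∧ r = ‖Matrix.toEuclideanCLM (𝕜 := ℂ) M x‖}

section aux
variable {k : Type*} [Fintype k] [DecidableEq k]

lemma lsv_nonneg (M : Matrix k k ℂ) : 0 ≤ leastSingularValue M := by
  apply Real.sInf_nonneg
  rintro r ⟨x, hx, rfl⟩; positivity

lemma lsv_le (M : Matrix k k ℂ) {x : EuclideanSpace ℂ k} (hx : ‖x‖ = 1) :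
    leastSingularValue M ≤ ‖Matrix.toEuclideanCLM (𝕜 := ℂ) M x‖ :=
  csInf_le ⟨0, by rintro r ⟨y, hy, rfl⟩; positivity⟩ ⟨x, hx, rfl⟩

lemma lsv_mul_le (M : Matrix k k ℂ) (x : EuclideanSpace ℂ k) :
    leastSingularValue M * ‖x‖ ≤ ‖Matrix.toEuclideanCLM (𝕜 := ℂ) M x‖ := by
  rcases eq_or_ne x 0 with rfl | hx
  · simp
  · have hnx : (0:ℝ) < ‖x‖ := norm_pos_iff.mpr hx
    have h1 : ‖((‖x‖ : ℂ))⁻¹ • x‖ = 1 := by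
      rw [norm_smul, norm_inv, Complex.norm_real, Real.norm_eq_abs, abs_of_pos hnx]
      field_simp
    have h2 := lsv_le M h1
    rw [map_smul, norm_smul, norm_inv, Complex.norm_real, Real.norm_eq_abs,
      abs_of_pos hnx] at h2
    calc leastSingularValue M * ‖x‖ ≤ (‖x‖⁻¹ * ‖Matrix.toEuclideanCLM (𝕜 := ℂ) M x‖) * ‖x‖ := by
          exact mul_le_mul_of_nonneg_right h2 (le_of_lt hnx)
      _ = ‖Matrix.toEuclideanCLM (𝕜 := ℂ) M x‖ := by field_simp

lemma lsv_attained (M : Matrix k k ℂ) [Nonempty k] :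
    ∃ x : EuclideanSpace ℂ k, ‖x‖ = 1 ∧
      leastSingularValue M = ‖Matrix.toEuclideanCLM (𝕜 := ℂ) M x‖ := by
  obtain ⟨x0, hx0, hmin⟩ := (isCompact_sphere (0 : EuclideanSpace ℂ k) 1).exists_isMinOn
    ⟨EuclideanSpace.single (Classical.arbitrary k) 1, by
      simp [mem_sphere_zero_iff_norm, EuclideanSpace.norm_single]⟩
    ((Matrix.toEuclideanCLM (𝕜 := ℂ) M).continuous.norm.continuousOn)
  have hx0' : ‖x0‖ = 1 := mem_sphere_zero_iff_norm.mp hx0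
  refine ⟨x0, hx0', le_antisymm (lsv_le M hx0') ?_⟩
  refine le_csInf ⟨‖Matrix.toEuclideanCLM (𝕜 := ℂ) M x0‖, ⟨x0, hx0', rfl⟩⟩ ?_
  rintro r ⟨y, hy, rfl⟩
  exact hmin (mem_sphere_zero_iff_norm.mpr hy)

end aux

section blocks
variable {α β : Type*} [Fintype α] [Fintype β]

noncomputable def lpart (z : EuclideanSpace ℂ (α ⊕ β)) : EuclideanSpace ℂ α :=
  (WithLp.equiv 2 _).symm fun i => (WithLp.equiv 2 _ z) (Sum.inl i)

noncomputable def rpart (z : EuclideanSpace ℂ (α ⊕ β)) : EuclideanSpace ℂ β :=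
  (WithLp.equiv 2 _).symm fun i => (WithLp.equiv 2 _ z) (Sum.inr i)

lemma sum_norm_sq (z : EuclideanSpace ℂ (α ⊕ β)) :
    ‖z‖ ^ 2 = ‖lpart z‖ ^ 2 + ‖rpart z‖ ^ 2 := by
  simp only [EuclideanSpace.norm_eq]
  rw [Real.sq_sqrt (by positivity), Real.sq_sqrt (by positivity), Real.sq_sqrt (by positivity),
    Fintype.sum_sum_type]
  simp [lpart, rpart, WithLp.equiv_symm_apply, WithLp.equiv_apply, PiLp.toLp_apply]

end blocks

section blk2
variable {m : ℕ}

lemma lpart_block (A₁ A₃ A₂ : Matrix (Fin m) (Fin m) ℂ) (z : EuclideanSpace ℂ (Fin m ⊕ Fin m)) :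
    lpart (Matrix.toEuclideanCLM (𝕜 := ℂ) (Matrix.fromBlocks A₁ 0 A₃ A₂) z)
      = Matrix.toEuclideanCLM (𝕜 := ℂ) A₁ (lpart z) := by
  apply (WithLp.equiv 2 _).injective
  funext i
  simp only [lpart, WithLp.equiv_symm_apply, WithLp.equiv_apply, PiLp.toLp_apply]
  show (Matrix.mulVec (Matrix.fromBlocks A₁ 0 A₃ A₂) (fun j => z j)) (Sum.inl i)
      = (Matrix.mulVec A₁ (fun j => z (Sum.inl j))) i
  rw [show (fun j => z j)
      = Sum.elim (fun j => z (Sum.inl j)) (fun j => z (Sum.inr j))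
      from by funext j; cases j <;> rfl,
    Matrix.fromBlocks_mulVec]
  simp

lemma rpart_block (A₁ A₃ A₂ : Matrix (Fin m) (Fin m) ℂ) (z : EuclideanSpace ℂ (Fin m ⊕ Fin m)) :
    rpart (Matrix.toEuclideanCLM (𝕜 := ℂ) (Matrix.fromBlocks A₁ 0 A₃ A₂) z)
      = Matrix.toEuclideanCLM (𝕜 := ℂ) A₃ (lpart z) + Matrix.toEuclideanCLM (𝕜 := ℂ) A₂ (rpart z) := by
  apply (WithLp.equiv 2 _).injective
  funext i
  simp only [rpart, lpart, WithLp.equiv_symm_apply, WithLp.equiv_apply, PiLp.toLp_apply]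
  show (Matrix.mulVec (Matrix.fromBlocks A₁ 0 A₃ A₂) (fun j => z j)) (Sum.inr i)
      = (Matrix.mulVec A₃ (fun j => z (Sum.inl j)) + Matrix.mulVec A₂ (fun j => z (Sum.inr j))) i
  rw [show (fun j => z j)
      = Sum.elim (fun j => z (Sum.inl j)) (fun j => z (Sum.inr j))
      from by funext j; cases j <;> rfl,
    Matrix.fromBlocks_mulVec]
  simp [Matrix.mulVec]

end blk2

lemma key_ineq (a b u v s l1 l2 D : ℝ) (ha : 0 ≤ a) (hb : 0 ≤ b) (hv : 0 ≤ v)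
    (hl1 : 0 ≤ l1) (hl2 : 0 ≤ l2) (hD : 0 ≤ D)
    (hab : a ^ 2 + b ^ 2 = 1) (huv : u ^ 2 + v ^ 2 = s ^ 2)
    (h3 : l1 * a ≤ u) (h4 : l2 * b ≤ v + D * a) :
    s ^ 2 * (l1 ^ 2 + l2 ^ 2 + D ^ 2) ≥ l1 ^ 2 * l2 ^ 2 := by
  have e1 : l2 ^ 2 * (l1 * a) ^ 2 ≤ l2 ^ 2 * u ^ 2 :=
    mul_le_mul_of_nonneg_left (pow_le_pow_left₀ (mul_nonneg hl1 ha) h3 2) (sq_nonneg l2)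
  have e2 : l1 * (v + D * a) ≤ l1 * v + D * u := by nlinarith
  have e3 : (l1 * (l2 * b)) ^ 2 ≤ (l1 * v + D * u) ^ 2 := by
    have h4' : l1 * (l2 * b) ≤ l1 * v + D * u := le_trans (by nlinarith) e2
    exact pow_le_pow_left₀ (mul_nonneg hl1 (mul_nonneg hl2 hb)) h4' 2
  have e4 : (l1 * v + D * u) ^ 2 ≤ (l1 ^ 2 + D ^ 2) * s ^ 2 := by
    nlinarith [sq_nonneg (l1 * u - D * v)]
  have e5 : l2 ^ 2 * u ^ 2 ≤ l2 ^ 2 * s ^ 2 := by nlinarith [sq_nonneg v, sq_nonneg l2]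
  have heq : l1 ^ 2 * l2 ^ 2 * (a ^ 2 + b ^ 2)
      = l2 ^ 2 * (l1 * a) ^ 2 + (l1 * (l2 * b)) ^ 2 := by ring
  rw [hab, mul_one] at heq
  have hfin : s ^ 2 * (l1 ^ 2 + l2 ^ 2 + D ^ 2)
      = l2 ^ 2 * s ^ 2 + (l1 ^ 2 + D ^ 2) * s ^ 2 := by ring
  linarith

theorem stmt16 (m : ℕ) (B : Matrix (Fin m) (Fin m) ℂ) (c d : ℂ) :
    let O : Matrix (Fin m ⊕ Fin m) (Fin m ⊕ Fin m) ℂ :=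
      Matrix.fromBlocks (B + c • 1) 0 (d • 1) (B - c • 1)
    leastSingularValue O ^ 2
        * (leastSingularValue (B + c • 1) ^ 2 + leastSingularValue (B - c • 1) ^ 2
            + ‖d‖ ^ 2)
      ≥ leastSingularValue (B + c • 1) ^ 2 * leastSingularValue (B - c • 1) ^ 2 := by
  intro O
  have hl1 : 0 ≤ leastSingularValue (B + c • 1) := lsv_nonneg _
  have hl2 : 0 ≤ leastSingularValue (B - c • 1) := lsv_nonneg _
  have hs : 0 ≤ leastSingularValue O := lsv_nonneg _
  have hD : (0:ℝ) ≤ ‖d‖ := norm_nonneg _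
  rcases eq_or_lt_of_le hl1 with h1 | h1
  · rw [← h1]
    have hpos : (0:ℝ) ≤ leastSingularValue O ^ 2 * ((0:ℝ) ^ 2
        + leastSingularValue (B - c • 1) ^ 2 + ‖d‖ ^ 2) := by positivity
    simpa using hpos
  rcases eq_or_lt_of_le hl2 with h2 | h2
  · rw [← h2]
    have hpos : (0:ℝ) ≤ leastSingularValue O ^ 2 * (leastSingularValue (B + c • 1) ^ 2
        + (0:ℝ) ^ 2 + ‖d‖ ^ 2) := by positivity
    simpa using hpos
  have hne : Nonempty (Fin m) := by
    rcases isEmpty_or_nonempty (Fin m) with h | h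
    · exfalso
      have hempty : {r : ℝ | ∃ x : EuclideanSpace ℂ (Fin m), ‖x‖ = 1 ∧
          r = ‖Matrix.toEuclideanCLM (𝕜 := ℂ) (B + c • 1) x‖} = ∅ := by
        ext r
        simp only [Set.mem_setOf_eq, Set.mem_empty_iff_false, iff_false, not_exists]
        rintro x ⟨hx, -⟩
        rw [EuclideanSpace.norm_eq] at hx
        simp [Finset.univ_eq_empty] at hx
      have : leastSingularValue (B + c • 1) = 0 := by
        rw [leastSingularValue, hempty, Real.sInf_empty]
      linarith
    · exact h
  obtain ⟨z, hz, hsig⟩ := lsv_attained O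
  set x := lpart z with hxdef
  set y := rpart z with hydef
  have hab : ‖x‖ ^ 2 + ‖y‖ ^ 2 = 1 := by
    rw [← sum_norm_sq, hz]; norm_num
  have hsmul : Matrix.toEuclideanCLM (𝕜 := ℂ) (d • (1 : Matrix (Fin m) (Fin m) ℂ)) x = d • x := by
    rw [map_smul, map_one]; rfl
  have huv : ‖Matrix.toEuclideanCLM (𝕜 := ℂ) (B + c • 1) x‖ ^ 2
      + ‖d • x + Matrix.toEuclideanCLM (𝕜 := ℂ) (B - c • 1) y‖ ^ 2
      = leastSingularValue O ^ 2 := by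
    rw [hsig, sum_norm_sq, lpart_block, rpart_block, hsmul]
  have h3 : leastSingularValue (B + c • 1) * ‖x‖
      ≤ ‖Matrix.toEuclideanCLM (𝕜 := ℂ) (B + c • 1) x‖ := lsv_mul_le _ _
  have h4 : leastSingularValue (B - c • 1) * ‖y‖
      ≤ ‖d • x + Matrix.toEuclideanCLM (𝕜 := ℂ) (B - c • 1) y‖ + ‖d‖ * ‖x‖ := by
    have ha := lsv_mul_le (B - c • 1) y
    have hb : ‖Matrix.toEuclideanCLM (𝕜 := ℂ) (B - c • 1) y‖
        ≤ ‖d • x + Matrix.toEuclideanCLM (𝕜 := ℂ) (B - c • 1) y‖ + ‖d • x‖ := by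
      calc ‖Matrix.toEuclideanCLM (𝕜 := ℂ) (B - c • 1) y‖
          = ‖(d • x + Matrix.toEuclideanCLM (𝕜 := ℂ) (B - c • 1) y) - d • x‖ := by
            rw [add_sub_cancel_left]
        _ ≤ _ := norm_sub_le _ _
    have hc : ‖d • x‖ = ‖d‖ * ‖x‖ := by
      rw [norm_smul]
    linarith
  exact key_ineq ‖x‖ ‖y‖ _ _ _ _ _ _ (norm_nonneg _) (norm_nonneg _) (norm_nonneg _)
    hl1 hl2 hD hab huv h3 h4
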